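/- Let D be a triangulated category with a bounded t-structure (D^{≤0}, D^{≥0}), and let F : D → D be a triangulated endofunctor such that F(D^{≤0}) ⊆ D^{≤0} and F(D^{≥0}) ⊆ D^{≥-1}. Then the full subcategory ker(F) = {X ∈ D : F(X) ≅ 0} is stable under the truncation functors τ_{≤0} and τ_{≥0}; in particular the t-structure on D restricts to a t-structure on ker(F). -/

import Mathlib

open CategoryTheory Limits Pretriangulated Triangulated

/-- If `F` is a triangulated endofunctor of a triangulated category with a
t-structure such that `F(D^{≤0}) ⊆ D^{≤0}` and `F(D^{≥0}) ⊆ D^{≥-1}`, then the kernel of `F`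
is stable under the truncation functors: for any truncation distinguished triangle
`A → X → B → A[1]` with `A ∈ D^{≤0}` and `B ∈ D^{≥1}`, if `F X ≅ 0` then `F A ≅ 0` and
`F B ≅ 0`; in particular the t-structure restricts to `ker F`. -/
theorem stmt0 {C : Type*} [Category C] [Preadditive C] [HasZeroObject C]
    [HasShift C ℤ] [∀ n : ℤ, (shiftFunctor C n).Additive] [Pretriangulated C]
    (t : TStructure C)
    (F : C ⥤ C) [F.CommShift ℤ] [F.IsTriangulated]
    (hF_le : ∀ X : C, t.le 0 X → t.le 0 (F.obj X))
    (hF_ge : ∀ X : C, t.ge 0 X → t.ge (-1) (F.obj X))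
    (X A B : C) (f : A ⟶ X) (g : X ⟶ B) (h : B ⟶ A⟦(1 : ℤ)⟧)
    (hT : Triangle.mk f g h ∈ distTriang C)
    (hA : t.le 0 A) (hB : t.ge 1 B)
    (hX : IsZero (F.obj X)) :
    IsZero (F.obj A) ∧ IsZero (F.obj B) := by
  have hT' := F.map_distinguished _ hT
  -- the image triangle F A ⟶ F X ⟶ F B ⟶ (F A)⟦1⟧
  have hX' : IsZero ((F.mapTriangle.obj (Triangle.mk f g h)).obj₂) := hX
  have hiso : IsIso ((F.mapTriangle.obj (Triangle.mk f g h)).mor₃) :=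
    (Triangle.isZero₂_iff_isIso₃ _ hT').1 hX'
  -- so F B ≅ (F A)⟦1⟧
  let e : F.obj B ≅ (F.obj A)⟦(1 : ℤ)⟧ :=
    @asIso _ _ _ _ ((F.mapTriangle.obj (Triangle.mk f g h)).mor₃) hiso
  -- F A ∈ LE 0, hence (F A)⟦1⟧ ∈ LE (-1), hence F B ∈ LE (-1)
  have hFA : t.le 0 (F.obj A) := hF_le A hA
  have hFB_le : t.le (-1) (F.obj B) := by
    refine ((t.le (-1)).prop_iff_of_iso e).2 ?_
    exact t.le_shift 0 1 (-1) (by omega) _ hFA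
  -- B ∈ GE 1 ⊆ GE 0, so F B ∈ GE (-1) ... via shifting: B⟦1⟧ ∈ GE 0,
  -- F (B⟦1⟧) ∈ GE (-1), (F B)⟦1⟧ ∈ GE (-1), so F B ∈ GE 0
  have hFB_ge : t.ge 0 (F.obj B) := by
    have h1 : t.ge 0 (B⟦(1 : ℤ)⟧) := t.ge_shift 1 1 0 (by omega) _ hB
    have h2 : t.ge (-1) (F.obj (B⟦(1 : ℤ)⟧)) := hF_ge _ h1
    have h3 : t.ge (-1) ((F.obj B)⟦(1 : ℤ)⟧) :=
      ((t.ge (-1)).prop_iff_of_iso ((F.commShiftIso (1 : ℤ)).app B)).1 h2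
    rw [← t.shift_ge 1 (-1) 0 (by omega)]
    exact h3
  -- an object in LE (-1) ∩ GE 0 is zero
  have hzero : ∀ (Z : C), t.le (-1) Z → t.ge 0 Z → IsZero Z := by
    intro Z hle hge
    have hle' : t.le 0 (Z⟦(-1 : ℤ)⟧) := t.le_shift (-1) (-1) 0 (by omega) _ hle
    have hge' : t.ge 1 (Z⟦(-1 : ℤ)⟧) := t.ge_shift 0 (-1) 1 (by omega) _ hge
    have hid : 𝟙 (Z⟦(-1 : ℤ)⟧) = 0 := t.zero' _ hle' hge'
    have hz : IsZero (Z⟦(-1 : ℤ)⟧) := by rwa [IsZero.iff_id_eq_zero]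
    have hz' : IsZero ((Z⟦(-1 : ℤ)⟧)⟦(1 : ℤ)⟧) := (shiftFunctor C (1 : ℤ)).map_isZero hz
    exact IsZero.of_iso hz' (shiftNegShift Z 1).symm
  have hFB : IsZero (F.obj B) := hzero _ hFB_le hFB_ge
  refine ⟨?_, hFB⟩
  -- now F A is zero since both F X and F B are zero in the triangle
  have := Triangle.isZero₁_of_isZero₂₃ _ hT' hX' hFB
  exact this
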